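/- Let s ≥ 1 and m ≥ 0 be integers, and for each j ∈ {1,…,s} let a_j be a positive real number, with a_{j₀} ≠ 1 for at least one index j₀. Then there is no holomorphic function F : ℍ^s × 𝔻^m → ℂ satisfying Im F(τ,w) > 0 for all (τ,w) ∈ ℍ^s × 𝔻^m and F(τ + e_j, w) = a_j · F(τ, w) for all (τ,w) ∈ ℍ^s × 𝔻^m and all j ∈ {1,…,s}. (This is the 'hyperbolic monodromy is excluded' part of the local extension theorem for transversely hyperbolic structures, stated on the universal cover ℍ^s × 𝔻^m of the polydisk 𝔻^{s+m} with its first s coordinate hyperplanes removed.) -/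

import Mathlib

open Complex

/-- If `u, v` are in the upper half plane then `u` is closer to `v` than to `conj v`. -/
lemma aux_abs_sub_lt (u v : ℂ) (hu : 0 < u.im) (hv : 0 < v.im) :
    ‖u - v‖ < ‖u - (starRingEnd ℂ) v‖ := by
  have h : Complex.normSq (u - v) < Complex.normSq (u - (starRingEnd ℂ) v) := by
    simp only [Complex.normSq_apply, Complex.sub_re, Complex.sub_im, Complex.conj_re,
      Complex.conj_im]
    nlinarith
  rw [Complex.norm_def, Complex.norm_def]
  exact Real.sqrt_lt_sqrt (Complex.normSq_nonneg _) h

/-- The hyperbolic case is excluded in the local extension theorem for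
transversely hyperbolic structures: there is no nonvacuous holomorphic function
`F : ℍ^s × 𝔻^m → ℂ` with values of positive imaginary part satisfying
`F(τ + e_j, w) = a_j · F(τ, w)` with all `a_j > 0` and some `a_{j₀} ≠ 1`. -/
theorem no_hyperbolic_monodromy
    (s m : ℕ) (hs : 1 ≤ s)
    (a : Fin s → ℝ) (hapos : ∀ j, 0 < a j)
    (j₀ : Fin s) (hj₀ : a j₀ ≠ 1)
    (F : (Fin s → ℂ) × (Fin m → ℂ) → ℂ)
    (hol : DifferentiableOn ℂ F
      {p : (Fin s → ℂ) × (Fin m → ℂ) |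
        (∀ j, 0 < (p.1 j).im) ∧ (∀ k, ‖p.2 k‖ < 1)})
    (hIm : ∀ (τ : Fin s → ℂ) (w : Fin m → ℂ),
      (∀ j, 0 < (τ j).im) → (∀ k, ‖w k‖ < 1) →
      0 < (F (τ, w)).im)
    (heq : ∀ (τ : Fin s → ℂ) (w : Fin m → ℂ),
      (∀ j, 0 < (τ j).im) → (∀ k, ‖w k‖ < 1) →
      ∀ j : Fin s, F (τ + Pi.single j 1, w) = (a j : ℂ) * F (τ, w)) :
    False := by
  classical
  set A := a j₀ with hAdef
  have hA : 0 < A := hapos j₀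
  have habs : 0 < |A - 1| := abs_pos.2 (sub_ne_zero.2 hj₀)
  -- choose a large T
  obtain ⟨T, hTdef⟩ : ∃ T : ℝ, T = 2 * (A + 1) / |A - 1| + 2 := ⟨_, rfl⟩
  have hfrac : 0 < (A + 1) / |A - 1| := by positivity
  have hT2 : 2 < T := by
    have h0 : 0 < 2 * (A + 1) / |A - 1| := by positivity
    rw [hTdef]; linarith
  have hT0 : (0 : ℝ) < T := by linarith
  -- the slice
  set τ : ℂ → (Fin s → ℂ) := fun z j => if j = j₀ then z else Complex.I with hτdef
  set f : ℂ → ℂ := fun z => F (τ z, 0) with hfdef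
  have hτim : ∀ z : ℂ, 0 < z.im → ∀ j, 0 < ((τ z) j).im := by
    intro z hz j
    by_cases h : j = j₀ <;> simp [hτdef, h, hz]
  have hw0 : ∀ k : Fin m, ‖(0 : Fin m → ℂ) k‖ < 1 := by
    intro k; simp
  -- center of the ball
  set c : ℂ := (T : ℂ) * Complex.I with hcdef
  have hcim : c.im = T := by simp [hcdef]
  have hball : ∀ z ∈ Metric.ball c T, 0 < z.im := by
    intro z hz
    rw [Metric.mem_ball, Complex.dist_eq] at hz
    have h1 : |(z - c).im| ≤ ‖z - c‖ := Complex.abs_im_le_norm _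
    have h2 : (z - c).im = z.im - T := by simp [hcdef]
    rw [h2] at h1
    have := abs_lt.1 (lt_of_le_of_lt h1 hz)
    linarith [this.1]
  -- f is differentiable on the ball
  have hfd : DifferentiableOn ℂ f (Metric.ball c T) := by
    have hinner : Differentiable ℂ (fun z : ℂ => ((τ z, 0) : (Fin s → ℂ) × (Fin m → ℂ))) := by
      apply Differentiable.prodMk
      · apply differentiable_pi.2
        intro j
        by_cases h : j = j₀ <;> simp [hτdef, h] <;> fun_prop
      · exact differentiable_const _
    exact hol.comp hinner.differentiableOn
      (fun z hz => ⟨hτim z (hball z hz), hw0⟩)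
  have hfim : ∀ z ∈ Metric.ball c T, 0 < (f z).im := fun z hz =>
    hIm _ _ (hτim z (hball z hz)) hw0
  have hcmem : c ∈ Metric.ball c T := Metric.mem_ball_self hT0
  set p : ℂ := f c with hpdef
  have hp : 0 < p.im := hfim c hcmem
  -- the Cayley-transformed function
  set g : ℂ → ℂ := fun z => (f z - p) / (f z - (starRingEnd ℂ) p) with hgdef
  have hden : ∀ z ∈ Metric.ball c T, f z - (starRingEnd ℂ) p ≠ 0 := by
    intro z hz h
    have : (f z - (starRingEnd ℂ) p).im = (f z).im + p.im := by simp
    rw [h] at this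
    have := hfim z hz
    simp at *
    linarith
  have hgd : DifferentiableOn ℂ g (Metric.ball c T) :=
    ((hfd.sub (differentiableOn_const _)).div
      (hfd.sub (differentiableOn_const _)) hden)
  have hgc : g c = 0 := by simp [hgdef, hpdef]
  have hmaps : Set.MapsTo g (Metric.ball c T) (Metric.ball (g c) 1) := by
    intro z hz
    rw [hgc, Metric.mem_ball, Complex.dist_eq, sub_zero, hgdef]
    beta_reduce
    rw [norm_div]
    rw [div_lt_one (by
      have := aux_abs_sub_lt (f z) p (hfim z hz) hp
      exact lt_of_le_of_lt (norm_nonneg _) this)]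
    exact aux_abs_sub_lt (f z) p (hfim z hz) hp
  -- Schwarz lemma
  have hz1 : c + 1 ∈ Metric.ball c T := by
    rw [Metric.mem_ball, Complex.dist_eq]
    simp
    linarith
  have hschwarz := Complex.dist_le_div_mul_dist_of_mapsTo_ball hgd
    (hmaps.mono_right Metric.ball_subset_closedBall) hz1
  rw [hgc, Complex.dist_eq, sub_zero, Complex.dist_eq, add_sub_cancel_left,
    norm_one, mul_one] at hschwarz
  -- functional equation: f (c+1) = A * f c
  have hfeq : f (c + 1) = (A : ℂ) * p := by
    have hτeq : τ (c + 1) = τ c + Pi.single j₀ 1 := by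
      funext j
      by_cases h : j = j₀
      · simp [hτdef, h, Pi.single_apply]
      · simp [hτdef, h, Pi.single_apply]
    rw [hfdef]
    simp only [hτeq]
    exact heq (τ c) 0 (hτim c (by rw [hcim]; exact hT0)) hw0 j₀
  -- lower bound for |g (c+1)|
  have hpne : p ≠ 0 := by
    intro h; rw [h] at hp; simp at hp
  have hglb : |A - 1| / (A + 1) ≤ ‖g (c + 1)‖ := by
    rw [hgdef]
    simp only
    rw [hfeq, norm_div]
    have hnum : ‖(A : ℂ) * p - p‖ = |A - 1| * ‖p‖ := by
      have : (A : ℂ) * p - p = ((A : ℝ) - 1 : ℂ) * p := by push_cast; ring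
      rw [this, norm_mul]
      congr 1
      rw [← Complex.ofReal_one, ← Complex.ofReal_sub, Complex.norm_real, Real.norm_eq_abs]
    have hdenub : ‖(A : ℂ) * p - (starRingEnd ℂ) p‖ ≤ (A + 1) * ‖p‖ := by
      calc ‖(A : ℂ) * p - (starRingEnd ℂ) p‖
          ≤ ‖(A : ℂ) * p‖ + ‖(starRingEnd ℂ) p‖ := by
            exact (norm_sub_le _ _)
        _ = A * ‖p‖ + ‖p‖ := by
            rw [norm_mul, Complex.norm_real, Real.norm_eq_abs, abs_of_pos hA, Complex.norm_conj]
        _ = (A + 1) * ‖p‖ := by ring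
    have hdenpos : 0 < ‖(A : ℂ) * p - (starRingEnd ℂ) p‖ := by
      rw [norm_pos_iff]
      intro h
      have him : ((A : ℂ) * p - (starRingEnd ℂ) p).im = A * p.im + p.im := by simp
      rw [h] at him
      simp at him
      nlinarith
    rw [hnum, div_le_div_iff₀ (by positivity) hdenpos]
    calc |A - 1| * ‖(A : ℂ) * p - (starRingEnd ℂ) p‖
        ≤ |A - 1| * ((A + 1) * ‖p‖) := by
          exact mul_le_mul_of_nonneg_left hdenub habs.le
      _ = |A - 1| * ‖p‖ * (A + 1) := by ring
  -- derive contradiction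
  have hineq : |A - 1| / (A + 1) ≤ 1 / T := le_trans hglb hschwarz
  have hTgt : (A + 1) / |A - 1| < T := by
    rw [hTdef]
    have h2 : (A + 1) / |A - 1| < 2 * (A + 1) / |A - 1| := by
      rw [div_lt_div_iff₀ habs habs]
      nlinarith
    linarith
  have h1 : 1 / T < |A - 1| / (A + 1) := by
    rw [div_lt_div_iff₀ hT0 (by positivity)]
    rw [div_lt_iff₀ habs] at hTgt
    nlinarith
  linarith
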